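/- If M β-reduces to N in n ≥ 1 steps, then N β-reduces to M^(n*) (the n-fold iterated Takahashi translation of M). -/

import Mathlib

inductive Lam : Type
  | var : ℕ → Lam
  | lam : Lam → Lam
  | app : Lam → Lam → Lam
  deriving DecidableEq

namespace Lam

/-- term size -/
def size : Lam → ℕ
  | var _ => 1
  | lam M => 1 + M.size
  | app M N => 1 + M.size + N.size

/-- lift (shift) free variables ≥ d by 1 -/
def lift (d : ℕ) : Lam → Lam
  | var n => if n < d then var n else var (n+1)
  | lam M => lam (M.lift (d+1))
  | app M N => app (M.lift d) (N.lift d)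

/-- capture-avoiding substitution of N for the free variable x (de Bruijn) -/
def subst : Lam → ℕ → Lam → Lam
  | var n, x, N => if n = x then N else if x < n then var (n-1) else var n
  | lam M, x, N => lam (M.subst (x+1) (N.lift 0))
  | app M P, x, N => app (M.subst x N) (P.subst x N)

/-- number of free occurrences of the variable x -/
def count : Lam → ℕ → ℕ
  | var n, x => if n = x then 1 else 0
  | lam M, x => M.count (x+1)
  | app M N, x => M.count x + N.count x

/-- one-step β-reduction -/
inductive Step : Lam → Lam → Prop
  | beta (M N : Lam) : Step (app (lam M) N) (M.subst 0 N)
  | appL {M M' : Lam} (N : Lam) : Step M M' → Step (app M N) (app M' N)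
  | appR (M : Lam) {N N' : Lam} : Step N N' → Step (app M N) (app M N')
  | abs {M M' : Lam} : Step M M' → Step (lam M) (lam M')

/-- many-step β-reduction (reflexive-transitive closure) -/
def Red : Lam → Lam → Prop := Relation.ReflTransGen Step

/-- n-step β-reduction -/
def Steps : ℕ → Lam → Lam → Prop
  | 0, M, N => M = N
  | n+1, M, N => ∃ P, Step M P ∧ Steps n P N

/-- Takahashi translation (Gross-Knuth complete development) -/
def star : Lam → Lam
  | var n => var n
  | lam M => lam (star M)
  | app (lam M) N => (star M).subst 0 (star N)
  | app (var n) N => app (var n) (star N)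
  | app (app M₁ M₂) N => app (star (app M₁ M₂)) (star N)

/-- iterated Takahashi translation M^(n*) -/
def iterStar (n : ℕ) (M : Lam) : Lam := star^[n] M

theorem lift_lift (M : Lam) : ∀ i j, i ≤ j →
    (M.lift j).lift i = (M.lift i).lift (j+1) := by
  induction M with
  | var n =>
    intro i j h; simp only [lift]
    split_ifs <;> simp only [lift] <;> split_ifs <;>
      first | rfl | (simp only [var.injEq]; omega) | (exfalso; omega)
  | lam M ih => intro i j h; simp [lift, ih (i+1) (j+1) (by omega)]
  | app M N ihM ihN => intro i j h; simp [lift, ihM i j h, ihN i j h]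

theorem subst_lift (M : Lam) : ∀ x N, (M.lift x).subst x N = M := by
  induction M with
  | var n =>
    intro x N; simp only [lift]
    split_ifs <;> simp only [subst] <;> split_ifs <;>
      first | rfl | (simp only [var.injEq]; omega) | (exfalso; omega)
  | lam M ih => intro x N; simp [lift, subst, ih]
  | app M P ihM ihP => intro x N; simp [lift, subst, ihM, ihP]

theorem lift_subst_le (M : Lam) : ∀ d x N, d ≤ x →
    (M.subst x N).lift d = (M.lift d).subst (x+1) (N.lift d) := by
  induction M with
  | var n =>
    intro d x N h; simp only [subst, lift]
    split_ifs <;> simp only [subst, lift] <;> split_ifs <;>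
      first | rfl | (simp only [var.injEq]; omega) | (exfalso; omega)
  | lam M ih =>
    intro d x N h
    simp only [subst, lift, ih (d+1) (x+1) (N.lift 0) (by omega)]
    rw [lift_lift N 0 d (by omega)]
  | app M P ihM ihP => intro d x N h; simp [subst, lift, ihM _ _ _ h, ihP _ _ _ h]

theorem lift_subst_ge (M : Lam) : ∀ d x N, x ≤ d →
    (M.subst x N).lift d = (M.lift (d+1)).subst x (N.lift d) := by
  induction M with
  | var n =>
    intro d x N h; simp only [subst, lift]
    split_ifs <;> simp only [subst, lift] <;> split_ifs <;>
      first | rfl | (simp only [var.injEq]; omega) | (exfalso; omega)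
  | lam M ih =>
    intro d x N h
    simp only [subst, lift, ih (d+1) (x+1) (N.lift 0) (by omega)]
    rw [lift_lift N 0 d (by omega)]
  | app M P ihM ihP => intro d x N h; simp [subst, lift, ihM _ _ _ h, ihP _ _ _ h]

theorem subst_subst (M : Lam) : ∀ i j N P, i ≤ j →
    (M.subst i N).subst j P = (M.subst (j+1) (P.lift i)).subst i (N.subst j P) := by
  induction M with
  | var n =>
    intro i j N P h; simp only [subst]
    by_cases e1 : n = i
    · rw [if_pos e1, if_neg (show ¬ n = j+1 by omega), if_neg (show ¬ j+1 < n by omega)]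
      simp only [subst, if_pos e1]
    · rw [if_neg e1]
      by_cases e2 : n = j+1
      · subst e2
        rw [if_pos (show i < j+1 by omega), if_pos rfl]
        simp only [subst]
        rw [if_pos (show j+1-1 = j by omega)]
        exact (subst_lift P i _).symm
      · rw [if_neg e2]
        by_cases e3 : i < n
        · rw [if_pos e3]
          by_cases e4 : j+1 < n
          · rw [if_pos e4]; simp only [subst]
            rw [if_neg (show ¬ n-1 = j by omega), if_pos (show j < n-1 by omega),
              if_neg (show ¬ n-1 = i by omega), if_pos (show i < n-1 by omega)]
          · rw [if_neg e4]; simp only [subst]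
            rw [if_neg (show ¬ n-1 = j by omega), if_neg (show ¬ j < n-1 by omega),
              if_neg e1, if_pos e3]
        · rw [if_neg e3, if_neg (show ¬ j+1 < n by omega)]; simp only [subst]
          rw [if_neg (show ¬ n = j by omega), if_neg (show ¬ j < n by omega),
            if_neg e1, if_neg e3]
  | lam M ih =>
    intro i j N P h
    simp only [subst]
    rw [ih (i+1) (j+1) (N.lift 0) (P.lift 0) (by omega)]
    rw [lift_lift P 0 i (by omega), lift_subst_le N 0 j P (by omega)]
  | app M Q ihM ihQ => intro i j N P h; simp [subst, ihM _ _ _ _ h, ihQ _ _ _ _ h]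


inductive Par : Lam → Lam → Prop
  | var (n : ℕ) : Par (var n) (var n)
  | lam {M M'} : Par M M' → Par (lam M) (lam M')
  | app {M M' N N'} : Par M M' → Par N N' → Par (app M N) (app M' N')
  | beta {M M' N N'} : Par M M' → Par N N' → Par (app (lam M) N) (M'.subst 0 N')

theorem Par.refl (M : Lam) : Par M M := by
  induction M with
  | var n => exact Par.var n
  | lam M ih => exact Par.lam ih
  | app M N ihM ihN => exact Par.app ihM ihN

theorem Step.par {M N : Lam} (h : Step M N) : Par M N := by
  induction h with
  | beta M N => exact Par.beta (Par.refl M) (Par.refl N)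
  | appL N _ ih => exact Par.app ih (Par.refl N)
  | appR M _ ih => exact Par.app (Par.refl M) ih
  | abs _ ih => exact Par.lam ih

theorem Par.lift {M M' : Lam} (h : Par M M') : ∀ d, Par (M.lift d) (M'.lift d) := by
  induction h with
  | var n => intro d; simp only [Lam.lift]; split_ifs <;> exact Par.refl _
  | lam _ ih => intro d; exact Par.lam (ih (d+1))
  | app _ _ ihM ihN => intro d; exact Par.app (ihM d) (ihN d)
  | beta _ _ ihM ihN =>
    intro d
    rw [lift_subst_ge _ d 0 _ (by omega)]
    exact Par.beta (ihM (d+1)) (ihN d)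

theorem Par.subst {M M' : Lam} (h : Par M M') :
    ∀ x {N N' : Lam}, Par N N' → Par (M.subst x N) (M'.subst x N') := by
  induction h with
  | var n =>
    intro x N N' hN; simp only [Lam.subst]
    split_ifs <;> first | exact hN | exact Par.refl _
  | lam _ ih => intro x N N' hN; exact Par.lam (ih (x+1) (hN.lift 0))
  | app _ _ ihM ihN => intro x N N' hN; exact Par.app (ihM x hN) (ihN x hN)
  | beta _ _ ihM ihN =>
    intro x N N' hN
    rw [subst_subst _ 0 x _ _ (by omega)]
    exact Par.beta (ihM (x+1) (hN.lift 0)) (ihN x hN)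

theorem Par.lam_inv {M P : Lam} (h : Par (Lam.lam M) P) : ∃ M', P = Lam.lam M' ∧ Par M M' := by
  cases h with
  | lam h => exact ⟨_, rfl, h⟩

theorem Par.triangle {M N : Lam} (h : Par M N) : Par N (star M) := by
  induction h with
  | var n => exact Par.var n
  | lam _ ih => exact Par.lam ih
  | app hM hN ihM ihN =>
    rename_i M M' P P'
    cases M with
    | var n => exact Par.app ihM ihN
    | app A B => exact Par.app ihM ihN
    | lam A =>
      obtain ⟨A', rfl, hA⟩ := hM.lam_inv
      obtain ⟨A'', hEq, hA'⟩ := ihM.lam_inv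
      cases hEq
      exact Par.beta hA' ihN
  | beta _ _ ihM ihN => exact ihM.subst 0 ihN

theorem Par.star_mono {M N : Lam} (h : Par M N) : Par (star M) (star N) :=
  h.triangle.triangle

theorem Red.appL {M M' : Lam} (N : Lam) (h : Red M M') : Red (app M N) (app M' N) :=
  Relation.ReflTransGen.lift (fun x => app x N) (fun _ _ h => Step.appL N h) _ _ h

theorem Red.appR (M : Lam) {N N' : Lam} (h : Red N N') : Red (app M N) (app M N') :=
  Relation.ReflTransGen.lift (fun x => app M x) (fun _ _ h => Step.appR M h) _ _ h

theorem Red.abs {M M' : Lam} (h : Red M M') : Red (lam M) (lam M') :=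
  Relation.ReflTransGen.lift lam (fun _ _ h => Step.abs h) _ _ h

theorem Par.red {M N : Lam} (h : Par M N) : Red M N := by
  induction h with
  | var n => exact Relation.ReflTransGen.refl
  | lam _ ih => exact Red.abs ih
  | app _ _ ihM ihN => exact Relation.ReflTransGen.trans (Red.appL _ ihM) (Red.appR _ ihN)
  | beta _ _ ihM ihN =>
    exact Relation.ReflTransGen.trans
      (Relation.ReflTransGen.trans (Red.appL _ (Red.abs ihM)) (Red.appR _ ihN))
      (Relation.ReflTransGen.single (Step.beta _ _))

theorem Par.iterStar_mono {M N : Lam} (h : Par M N) (n : ℕ) :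
    Par (star^[n] M) (star^[n] N) := by
  induction n with
  | zero => exact h
  | succ n ih => rw [Function.iterate_succ_apply', Function.iterate_succ_apply']
                 exact ih.star_mono

theorem cofinal_aux : ∀ (n : ℕ) (M N : Lam), Steps (n+1) M N → Red N (iterStar (n+1) M) := by
  intro n
  induction n with
  | zero =>
    rintro M N ⟨P, hMP, hPN⟩
    cases hPN
    simpa [iterStar] using hMP.par.triangle.red
  | succ n ih =>
    rintro M N ⟨P, hMP, hPN⟩
    have h1 : Red N (iterStar (n+1) P) := ih P N hPN
    have h2 : Par (star^[n+1] P) (star^[n+1] (star M)) :=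
      (hMP.par.triangle).iterStar_mono (n+1)
    rw [← Function.iterate_succ_apply] at h2
    exact Relation.ReflTransGen.trans h1 h2.red


end Lam

/-- if M ↠^n N with n ≥ 1 then N ↠ M^(n*) -/
theorem cofinal {n : ℕ} {M N : Lam} (hn : 1 ≤ n) (h : Lam.Steps n M N) :
    Lam.Red N (Lam.iterStar n M) := by
  obtain ⟨m, rfl⟩ : ∃ m, n = m + 1 := ⟨n - 1, by omega⟩
  exact Lam.cofinal_aux m M N h
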